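/- (Incompatibility of stationarity conditions in the counterexample.) For τ > 0, τ ≠ τ_i where τ_i ≈ 0.2779 is the unique positive solution of (1 - τ log 3)/3 = (exp(0.25/τ)+1)^{-1}, there is no p ∈ (0,1) satisfying both τ log 3 + 3p - 1 = 0 and -0.25 + τ log((1-p)/p) = 0 simultaneously. Equivalently, the two curves p = (1 - τ log 3)/3 and p = 1/(exp(0.25/τ)+1) intersect at exactly one value of τ > 0. -/

import Mathlib

/-- **Incompatibility of stationarity conditions in the counterexample.**
The curves `τ ↦ (1 - τ log 3)/3` and `τ ↦ (exp(0.25/τ) + 1)⁻¹` intersect at exactly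
one `τ > 0` (namely `τ_i ≈ 0.2779`), and for any `τ > 0` at which they do not
intersect, no `p ∈ (0,1)` satisfies both stationarity conditions
`τ log 3 + 3p - 1 = 0` and `-0.25 + τ log((1-p)/p) = 0` simultaneously. -/
theorem counterexample_incompatible_stationarity :
    (∃! τ : ℝ, 0 < τ ∧
        (1 - τ * Real.log 3) / 3 = (Real.exp ((1/4) / τ) + 1)⁻¹) ∧
    (∀ τ : ℝ, 0 < τ →
      (1 - τ * Real.log 3) / 3 ≠ (Real.exp ((1/4) / τ) + 1)⁻¹ →
      ∀ p : ℝ, 0 < p → p < 1 →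
        ¬(τ * Real.log 3 + 3 * p - 1 = 0 ∧
          -(1/4) + τ * Real.log ((1 - p) / p) = 0)) := by
  have hlog3 : 1 < Real.log 3 := by
    have h := Real.exp_one_lt_d9
    have : Real.exp 1 < 3 := by linarith
    calc (1:ℝ) = Real.log (Real.exp 1) := by simp
    _ < Real.log 3 := Real.log_lt_log (Real.exp_pos 1) this
  have hlog3' : Real.log 3 < 2 := by
    have := Real.log_lt_sub_one_of_pos (by norm_num : (0:ℝ) < 3) (by norm_num)
    linarith
  set F : ℝ → ℝ := fun τ => (1 - τ * Real.log 3) / 3 - (Real.exp ((1/4) / τ) + 1)⁻¹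
    with hFdef
  have hanti : StrictAntiOn F (Set.Ioi 0) := by
    intro a ha b hb hab
    simp only [Set.mem_Ioi] at ha hb
    have h1 : (1 - b * Real.log 3)/3 < (1 - a * Real.log 3)/3 := by nlinarith
    have hdiv : (1/4 : ℝ)/b < (1/4)/a :=
      div_lt_div_of_pos_left (by norm_num) ha hab
    have h2 : (Real.exp ((1/4)/a) + 1)⁻¹ < (Real.exp ((1/4)/b) + 1)⁻¹ := by
      apply inv_strictAnti₀ (by positivity)
      exact add_lt_add_left (Real.exp_lt_exp.mpr hdiv) 1
    simp only [hFdef]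
    linarith
  have hcont : ContinuousOn F (Set.Icc (1/20 : ℝ) 1) := by
    apply ContinuousOn.sub
    · exact (Continuous.continuousOn (by continuity))
    · apply ContinuousOn.inv₀
      · apply ContinuousOn.add _ continuousOn_const
        apply Real.continuous_exp.comp_continuousOn
        apply ContinuousOn.div continuousOn_const continuousOn_id
        intro x hx
        have : (1/20 : ℝ) ≤ x := hx.1
        positivity
      · intro x hx
        positivity
  have hexp5 : (2.7 : ℝ) < Real.exp 5 := by
    have h1 := Real.exp_one_gt_d9
    have h2 : Real.exp 1 ≤ Real.exp 5 := Real.exp_le_exp.mpr (by norm_num)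
    linarith
  have hF05 : 0 < F (1/20) := by
    have h1 : ((1:ℝ)/4) / (1/20) = 5 := by norm_num
    have hinv : (Real.exp 5 + 1)⁻¹ ≤ (3.7 : ℝ)⁻¹ := by
      apply inv_anti₀ (by norm_num)
      linarith
    have : ((3.7:ℝ))⁻¹ < 0.3 := by norm_num
    simp only [hFdef, h1]
    nlinarith
  have hF1 : F 1 < 0 := by
    have hpos : 0 < (Real.exp ((1/4)/1) + 1)⁻¹ := by positivity
    simp only [hFdef]
    nlinarith
  obtain ⟨τ₀, hτ₀mem, hτ₀⟩ := intermediate_value_Icc' (by norm_num : (1/20:ℝ) ≤ 1)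
    hcont ⟨le_of_lt hF1, le_of_lt hF05⟩
  have hτ₀pos : (0:ℝ) < τ₀ := lt_of_lt_of_le (by norm_num) hτ₀mem.1
  constructor
  · refine ⟨τ₀, ⟨hτ₀pos, by simpa [hFdef, sub_eq_zero] using hτ₀⟩, ?_⟩
    intro τ' ⟨hτ'pos, hτ'eq⟩
    have h1 : F τ' = 0 := by simp [hFdef, sub_eq_zero, hτ'eq]
    exact hanti.injOn (Set.mem_Ioi.mpr hτ'pos) (Set.mem_Ioi.mpr hτ₀pos)
      (by rw [h1, hτ₀])
  · intro τ hτ hne p hp0 hp1 ⟨h1, h2⟩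
    apply hne
    have hq : (0:ℝ) < (1 - p)/p := div_pos (by linarith) hp0
    have hlog : Real.log ((1-p)/p) = (1/4)/τ := by
      field_simp
      linarith
    have hexp : Real.exp ((1/4)/τ) = (1-p)/p := by
      rw [← hlog, Real.exp_log hq]
    have hsum : Real.exp ((1/4)/τ) + 1 = 1/p := by
      rw [hexp]; field_simp; ring
    rw [hsum]
    rw [one_div, inv_inv]
    linarith
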